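/- If every vertex reachable from x₀ in the extended game has a nonempty set Λ*(v) of λ*-consistent plays, then every play ρ⁰ ∈ Λ*(x₀) is the outcome of some subgame perfect equilibrium of (X, x₀). The SPE is built by, after each deviation at a vertex v to a successor v', following a play ρ_{i,v'} ∈ Λ*(v') maximizing Cost_i over Λ*(v'), where i is the deviating player. -/

import Mathlib

open scoped Classical

namespace SPE

variable {V : Type*} {P : Type*}

/-- Vertices of the extended game: a base vertex together with the set of players
having already visited their target set. -/
abbrev XV (V P : Type*) := V × Set P

/-- Edges of the extended game induced by base edges `E` and target sets `F`. -/
def XEdge (E : V → V → Prop) (F : P → Set V) (a b : XV V P) : Prop :=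
  E a.1 b.1 ∧ b.2 = a.2 ∪ {i | b.1 ∈ F i}

/-- Plays of the extended game starting at `x`. -/
def IsPlay (E : V → V → Prop) (F : P → Set V) (x : XV V P) (ρ : ℕ → XV V P) : Prop :=
  ρ 0 = x ∧ ∀ k, XEdge E F (ρ k) (ρ (k + 1))

/-- Cost of player `i` along the suffix `ρ_{≥ n}`: the least `k` such that `i` belongs to
the second component of `ρ (n + k)`, and `⊤` if there is no such `k`. -/
noncomputable def costFrom (ρ : ℕ → XV V P) (n : ℕ) (i : P) : ℕ∞ :=
  sInf ((fun k : ℕ => (k : ℕ∞)) '' {k | i ∈ (ρ (n + k)).2})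

/-- Cost of player `i` along the play `ρ` of the extended game. -/
noncomputable def cost (ρ : ℕ → XV V P) (i : P) : ℕ∞ := costFrom ρ 0 i

/-- `λ`-consistency of a play. -/
def Consistent (own : V → P) (lam : XV V P → ℕ∞) (ρ : ℕ → XV V P) : Prop :=
  ∀ n, costFrom ρ n (own (ρ n).1) ≤ lam (ρ n)

/-- The set `Λ(x)` of `λ`-consistent plays from `x`. -/
def Lam (E : V → V → Prop) (F : P → Set V) (own : V → P) (lam : XV V P → ℕ∞)
    (x : XV V P) : Set (ℕ → XV V P) :=
  {ρ | IsPlay E F x ρ ∧ Consistent own lam ρ}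

/-- The initial labeling `λ⁰`. -/
noncomputable def lam0 (own : V → P) : XV V P → ℕ∞ :=
  fun v => if own v.1 ∈ v.2 then 0 else ⊤

/-- The labeling update operator. -/
noncomputable def update (E : V → V → Prop) (F : P → Set V) (own : V → P)
    (lam : XV V P → ℕ∞) (v : XV V P) : ℕ∞ :=
  if own v.1 ∈ v.2 then 0
  else ⨅ w ∈ {w : XV V P | XEdge E F v w},
    (1 + sSup ((fun ρ => cost ρ (own v.1)) '' Lam E F own lam w))

/-- Prepend a finite list in front of an infinite sequence. -/
def listAppendSeq {α : Type*} (h : List α) (ρ : ℕ → α) : ℕ → α :=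
  fun k => if hk : k < h.length then h.get ⟨k, hk⟩ else ρ (k - h.length)

/-- Validity of a strategy profile in the extended game: the prescribed moves follow edges. -/
def StratValid (E : V → V → Prop) (F : P → Set V)
    (σ : List (XV V P) → XV V P → XV V P) : Prop :=
  ∀ h v, XEdge E F v (σ h v)

/-- The outcome of a strategy profile after history `h` from vertex `v`. -/
def outcome (σ : List (XV V P) → XV V P → XV V P) :
    List (XV V P) → XV V P → ℕ → XV V P
  | _, v, 0 => v
  | h, v, n + 1 => outcome σ (h ++ [v]) (σ h v) n

/-- `h·v` is a history of the initialized extended game `(X, x0)`. -/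
def IsHistoryFrom (E : V → V → Prop) (F : P → Set V) (x0 : XV V P)
    (h : List (XV V P)) (v : XV V P) : Prop :=
  (h ++ [v]).head? = some x0 ∧ (h ++ [v]).Chain' (XEdge E F)

/-- Cost of player `i` of the play `h·ρ` (cost in the subgame after `h`). -/
noncomputable def costAfter (h : List (XV V P)) (ρ : ℕ → XV V P) (i : P) : ℕ∞ :=
  sInf ((fun k : ℕ => (k : ℕ∞)) '' {k | i ∈ (listAppendSeq h ρ k).2})

/-- `τ` is a unilateral deviation of player `i` from the profile `σ`. -/
def Deviation (own : V → P) (σ τ : List (XV V P) → XV V P → XV V P) (i : P) : Prop :=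
  ∀ h v, own v.1 ≠ i → τ h v = σ h v

/-- Subgame perfect equilibrium of the initialized extended game. -/
def IsSPE (E : V → V → Prop) (F : P → Set V) (own : V → P) (x0 : XV V P)
    (σ : List (XV V P) → XV V P → XV V P) : Prop :=
  StratValid E F σ ∧
  ∀ h v, IsHistoryFrom E F x0 h v → ∀ (i : P) τ, StratValid E F τ →
    Deviation own σ τ i →
    costAfter h (outcome σ h v) i ≤ costAfter h (outcome τ h v) i

/-! ### ℕ∞ infimum facts -/

lemma enat_sInf_mem {T : Set ℕ∞} (hT : T.Nonempty) : sInf T ∈ T := by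
  by_cases htop : ∀ x ∈ T, x = ⊤
  · obtain ⟨x, hx⟩ := hT
    have h : sInf T = ⊤ := sInf_eq_top.2 htop
    rw [h, ← htop x hx]; exact hx
  · push_neg at htop
    obtain ⟨x, hxT, hxne⟩ := htop
    lift x to ℕ using hxne
    have hne : {n : ℕ | (n : ℕ∞) ∈ T}.Nonempty := ⟨x, hxT⟩
    have hmem := Nat.sInf_mem hne
    have h : sInf T = ((sInf {n : ℕ | (n : ℕ∞) ∈ T} : ℕ) : ℕ∞) := by
      apply le_antisymm (sInf_le (show ((sInf {n : ℕ | (n : ℕ∞) ∈ T} : ℕ) : ℕ∞) ∈ T from hmem))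
      refine le_sInf fun b hb => ?_
      induction b using ENat.recTopCoe with
      | top => exact le_top
      | coe n => exact_mod_cast Nat.sInf_le hb
    rw [h]; exact hmem

lemma enat_add_sInf (c : ℕ∞) (T : Set ℕ∞) :
    sInf ((fun x => c + x) '' T) = c + sInf T := by
  rcases T.eq_empty_or_nonempty with rfl | hT
  · simp
  · apply le_antisymm
    · exact sInf_le ⟨sInf T, enat_sInf_mem hT, rfl⟩
    · refine le_sInf ?_
      rintro b ⟨x, hx, rfl⟩
      exact add_le_add (le_refl c) (sInf_le hx)

/-! ### cost lemmas -/

lemma costFrom_eq_zero {ρ : ℕ → XV V P} {n : ℕ} {i : P} (h : i ∈ (ρ n).2) :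
    costFrom ρ n i = 0 := by
  apply le_antisymm _ zero_le
  exact sInf_le ⟨0, by simpa using h, by simp⟩

lemma costFrom_le_coe {ρ : ℕ → XV V P} {n : ℕ} {i : P} {m : ℕ} :
    costFrom ρ n i ≤ (m : ℕ∞) ↔ ∃ k ≤ m, i ∈ (ρ (n + k)).2 := by
  constructor
  · intro h
    rcases Set.eq_empty_or_nonempty {k | i ∈ (ρ (n + k)).2} with he | hne
    · rw [costFrom, he] at h; simp at h
    · obtain ⟨k, hk, hco⟩ := enat_sInf_mem (hne.image (fun k : ℕ => (k : ℕ∞)))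
      refine ⟨k, ?_, hk⟩
      have hco' : (k : ℕ∞) = costFrom ρ n i := hco
      have : (k : ℕ∞) ≤ (m : ℕ∞) := by rw [hco']; exact h
      exact_mod_cast this
  · rintro ⟨k, hkm, hk⟩
    exact le_trans (sInf_le ⟨k, hk, rfl⟩) (show (k : ℕ∞) ≤ (m : ℕ∞) by exact_mod_cast hkm)

lemma costFrom_eq_top {ρ : ℕ → XV V P} {n : ℕ} {i : P} :
    costFrom ρ n i = ⊤ ↔ ∀ k, i ∉ (ρ (n + k)).2 := by
  rw [costFrom, sInf_eq_top]
  constructor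
  · intro h k hk
    exact (ENat.coe_ne_top k) (h _ ⟨k, hk, rfl⟩)
  · rintro h x ⟨k, hk, rfl⟩
    exact absurd hk (h k)

lemma costFrom_succ {ρ : ℕ → XV V P} {n : ℕ} {i : P} (h : i ∉ (ρ n).2) :
    costFrom ρ n i = 1 + costFrom ρ (n + 1) i := by
  have hset : {k | i ∈ (ρ (n + k)).2} = (fun j => j + 1) '' {k | i ∈ (ρ (n + 1 + k)).2} := by
    ext k
    simp only [Set.mem_setOf_eq, Set.mem_image]
    constructor
    · intro hk
      rcases k with _ | j
      · exact absurd (by simpa using hk) h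
      · exact ⟨j, by rwa [show n + 1 + j = n + (j + 1) from by omega], rfl⟩
    · rintro ⟨j, hj, rfl⟩
      rwa [show n + (j + 1) = n + 1 + j from by omega]
  have hcomp : ((fun k : ℕ => (k : ℕ∞)) ∘ fun j => j + 1)
      = (fun x => 1 + x) ∘ (fun k : ℕ => (k : ℕ∞)) := by
    funext j
    simp only [Function.comp_apply]
    push_cast
    ring
  rw [costFrom, hset, ← Set.image_comp, hcomp, Set.image_comp, enat_add_sInf]
  rfl

lemma costFrom_shift (ρ : ℕ → XV V P) (m n : ℕ) (i : P) :
    costFrom (fun k => ρ (k + m)) n i = costFrom ρ (n + m) i := by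
  have h : ∀ k, n + k + m = n + m + k := fun k => Nat.add_right_comm n k m
  simp only [costFrom, h]

lemma Consistent.shift1 {own : V → P} {lam : XV V P → ℕ∞} {ρ : ℕ → XV V P}
    (h : Consistent own lam ρ) : Consistent own lam (fun k => ρ (k + 1)) := by
  intro n
  have h2 := h (n + 1)
  simpa [costFrom_shift ρ 1 n] using h2

/-! ### costAfter -/

lemma costAfter_eq (h : List (XV V P)) (ρ : ℕ → XV V P) (i : P) :
    costAfter h ρ i =
      sInf ((fun k : ℕ => (k : ℕ∞)) '' {k | ∃ hk : k < h.length, i ∈ (h.get ⟨k, hk⟩).2}) ⊓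
        ((h.length : ℕ∞) + cost ρ i) := by
  rw [costAfter]
  have hset : {k | i ∈ (listAppendSeq h ρ k).2} =
      {k | ∃ hk : k < h.length, i ∈ (h.get ⟨k, hk⟩).2} ∪
      ((fun j => h.length + j) '' {j | i ∈ (ρ j).2}) := by
    ext k
    by_cases hk : k < h.length
    · simp only [Set.mem_setOf_eq, Set.mem_union, Set.mem_image, listAppendSeq, dif_pos hk]
      constructor
      · intro hmem; exact Or.inl ⟨hk, hmem⟩
      · rintro (⟨hk', hmem⟩ | ⟨j, _, hjk⟩)
        · exact hmem
        · omega
    · simp only [Set.mem_setOf_eq, Set.mem_union, Set.mem_image, listAppendSeq, dif_neg hk]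
      constructor
      · intro hmem
        exact Or.inr ⟨k - h.length, hmem, by omega⟩
      · rintro (⟨hk', _⟩ | ⟨j, hj, rfl⟩)
        · omega
        · simpa [Nat.add_sub_cancel_left] using hj
  rw [hset, Set.image_union, sInf_union]
  congr 1
  rw [← Set.image_comp]
  have hcomp : ((fun k : ℕ => (k : ℕ∞)) ∘ fun j => h.length + j)
      = (fun x => (h.length : ℕ∞) + x) ∘ (fun k : ℕ => (k : ℕ∞)) := by
    funext j; simp
  rw [hcomp, Set.image_comp, enat_add_sInf]
  congr 1
  simp [cost, costFrom, Nat.zero_add]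

lemma costAfter_mono (h : List (XV V P)) (ρ ρ' : ℕ → XV V P) (i : P)
    (hc : cost ρ i ≤ cost ρ' i) : costAfter h ρ i ≤ costAfter h ρ' i := by
  rw [costAfter_eq, costAfter_eq]
  exact inf_le_inf le_rfl (add_le_add le_rfl hc)

/-! ### closedness and sup=max -/

lemma isClosed_cyl {A : Type*} [TopologicalSpace A] [DiscreteTopology A]
    (S : Set (ℕ → A))
    (hS : ∀ ρ ∉ S, ∃ N : ℕ, ∀ ρ', (∀ t ≤ N, ρ' t = ρ t) → ρ' ∉ S) :
    IsClosed S := by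
  rw [← isOpen_compl_iff, isOpen_iff_mem_nhds]
  intro ρ hρ
  obtain ⟨N, hN⟩ := hS ρ hρ
  have hU : IsOpen (⋂ t ∈ Finset.range (N + 1), {ρ' : ℕ → A | ρ' t = ρ t}) := by
    apply isOpen_biInter_finset
    intro t _
    have heq : {ρ' : ℕ → A | ρ' t = ρ t} = (fun ρ' : ℕ → A => ρ' t) ⁻¹' {x : A | x = ρ t} := rfl
    rw [heq]
    exact IsOpen.preimage (continuous_apply t) (isOpen_discrete {x : A | x = ρ t})
  refine mem_nhds_iff.2 ⟨_, ?_, hU, ?_⟩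
  · intro ρ' hρ'
    simp only [Set.mem_iInter, Finset.mem_range, Set.mem_setOf_eq] at hρ'
    exact hN ρ' (fun t ht => hρ' t (by omega))
  · simp

lemma isClosed_Lam [TopologicalSpace (XV V P)] [DiscreteTopology (XV V P)]
    (E : V → V → Prop) (F : P → Set V) (own : V → P) (lam : XV V P → ℕ∞) (w : XV V P) :
    IsClosed (Lam E F own lam w) := by
  apply isClosed_cyl
  intro ρ hρ
  by_cases h1 : ρ 0 = w
  · by_cases h2 : ∀ k, XEdge E F (ρ k) (ρ (k + 1))
    · have h3 : ¬ Consistent own lam ρ := fun hc => hρ ⟨⟨h1, h2⟩, hc⟩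
      obtain ⟨n, hn⟩ := not_forall.1 h3
      have hfin : lam (ρ n) ≠ ⊤ := by
        intro ht
        exact hn (by rw [ht]; exact le_top)
      obtain ⟨m, hm⟩ := WithTop.ne_top_iff_exists.1 hfin
      refine ⟨n + m, fun ρ' hagree hmem => ?_⟩
      have hρn : ρ' n = ρ n := hagree n (by omega)
      have hcons := hmem.2 n
      rw [hρn, ← hm] at hcons
      obtain ⟨k, hkm, hk⟩ := costFrom_le_coe.1 hcons
      have hk' : own (ρ n).1 ∈ (ρ (n + k)).2 := by
        rwa [hagree (n + k) (by omega)] at hk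
      exact hn (by rw [← hm]; exact costFrom_le_coe.2 ⟨k, hkm, hk'⟩)
    · push_neg at h2
      obtain ⟨k, hk⟩ := h2
      refine ⟨k + 1, fun ρ' hagree hmem => ?_⟩
      have := hmem.1.2 k
      rw [hagree k (by omega), hagree (k + 1) (by omega)] at this
      exact hk this
  · exact ⟨0, fun ρ' hagree hmem => h1 (by rw [← hagree 0 le_rfl]; exact hmem.1.1)⟩

lemma exists_cost_max [Finite V] [Finite P]
    (E : V → V → Prop) (F : P → Set V) (own : V → P) (lam : XV V P → ℕ∞)
    (w : XV V P) (i : P) (hΛ : (Lam E F own lam w).Nonempty) :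
    ∃ ρ ∈ Lam E F own lam w, ∀ ρ' ∈ Lam E F own lam w, cost ρ' i ≤ cost ρ i := by
  by_cases htop : ∃ ρ ∈ Lam E F own lam w, cost ρ i = ⊤
  · obtain ⟨ρ, hρ, hc⟩ := htop
    exact ⟨ρ, hρ, fun ρ' _ => hc ▸ le_top⟩
  push_neg at htop
  by_cases hbd : ∃ N : ℕ, ∀ ρ ∈ Lam E F own lam w, cost ρ i ≤ (N : ℕ∞)
  · obtain ⟨N, hN⟩ := hbd
    have hTne : {n : ℕ | ∃ ρ ∈ Lam E F own lam w, cost ρ i = (n : ℕ∞)}.Nonempty := by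
      obtain ⟨ρ, hρ⟩ := hΛ
      obtain ⟨n, hn⟩ := WithTop.ne_top_iff_exists.1 (htop ρ hρ)
      exact ⟨n, ρ, hρ, hn.symm⟩
    have hTbdd : BddAbove {n : ℕ | ∃ ρ ∈ Lam E F own lam w, cost ρ i = (n : ℕ∞)} := by
      refine ⟨N, ?_⟩
      rintro n ⟨ρ, hρ, hn⟩
      exact_mod_cast hn ▸ hN ρ hρ
    obtain ⟨ρ, hρ, hn⟩ := Nat.sSup_mem hTne hTbdd
    refine ⟨ρ, hρ, fun ρ' h' => ?_⟩
    obtain ⟨n', hn'⟩ := WithTop.ne_top_iff_exists.1 (htop ρ' h')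
    rw [← hn', hn]
    exact Nat.cast_le.2 (le_csSup hTbdd ⟨ρ', h', hn'.symm⟩)
  · exfalso
    push_neg at hbd
    letI : TopologicalSpace (XV V P) := ⊥
    haveI : DiscreteTopology (XV V P) := ⟨rfl⟩
    set Z : ℕ → Set (ℕ → XV V P) :=
      fun N => {ρ | ρ ∈ Lam E F own lam w ∧ ∀ k ≤ N, i ∉ (ρ k).2} with hZ
    have hZd : ∀ N, Z (N + 1) ⊆ Z N := by
      rintro N ρ ⟨hρ, hk⟩
      exact ⟨hρ, fun k hkN => hk k (by omega)⟩
    have hZn : ∀ N, (Z N).Nonempty := by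
      intro N
      obtain ⟨ρ, hρ, hgt⟩ := hbd N
      refine ⟨ρ, hρ, fun k hkN hik => absurd ?_ (not_le.2 hgt)⟩
      exact costFrom_le_coe.2 ⟨k, hkN, by simpa using hik⟩
    have hmiss : ∀ N : ℕ, IsClosed {ρ : ℕ → XV V P | ∀ k ≤ N, i ∉ (ρ k).2} := by
      intro N
      apply isClosed_cyl
      intro ρ hρ
      have hρ' : ¬ ∀ k ≤ N, i ∉ (ρ k).2 := hρ
      push_neg at hρ'
      obtain ⟨k, hkN, hik⟩ := hρ'
      refine ⟨N, fun ρ' hagree hmem => ?_⟩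
      exact hmem k hkN (by rwa [hagree k hkN])
    have hZc : ∀ N, IsClosed (Z N) := by
      intro N
      exact (isClosed_Lam E F own lam w).inter (hmiss N)
    have hZcomp : IsCompact (Z 0) := (hZc 0).isCompact
    obtain ⟨ρ, hρ⟩ :=
      IsCompact.nonempty_iInter_of_sequence_nonempty_isCompact_isClosed Z hZd hZn hZcomp hZc
    simp only [Set.mem_iInter] at hρ
    have hρΛ : ρ ∈ Lam E F own lam w := (hρ 0).1
    have hct : cost ρ i = ⊤ := by
      rw [cost, costFrom_eq_top]
      intro k
      simpa using (hρ k).2 k le_rfl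
    exact htop ρ hρΛ hct


/-! ### strategy construction -/

section Strategy

variable (E : V → V → Prop) (F : P → Set V) (own : V → P) (lam : XV V P → ℕ∞)
  (htot : ∀ u : V, ∃ w, E u w)

noncomputable def basePlay (v : XV V P) : ℕ → XV V P
  | 0 => v
  | n + 1 =>
    ⟨(htot (basePlay v n).1).choose,
      (basePlay v n).2 ∪ {i | (htot (basePlay v n).1).choose ∈ F i}⟩

lemma basePlay_isPlay (v : XV V P) : IsPlay E F v (basePlay E F htot v) :=
  ⟨rfl, fun _ => ⟨(htot _).choose_spec, rfl⟩⟩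

noncomputable def pun (i : P) (w : XV V P) : ℕ → XV V P :=
  if h : ∃ ρ ∈ Lam E F own lam w, ∀ ρ' ∈ Lam E F own lam w, cost ρ' i ≤ cost ρ i
  then h.choose else basePlay E F htot w

lemma pun_isPlay (i : P) (w : XV V P) : IsPlay E F w (pun E F own lam htot i w) := by
  rw [pun]
  split_ifs with hex
  · exact hex.choose_spec.1.1
  · exact basePlay_isPlay E F htot w

lemma pun_spec [Finite V] [Finite P] (i : P) (w : XV V P)
    (hΛ : (Lam E F own lam w).Nonempty) :
    pun E F own lam htot i w ∈ Lam E F own lam w ∧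
      ∀ ρ' ∈ Lam E F own lam w, cost ρ' i ≤ cost (pun E F own lam htot i w) i := by
  have hex := exists_cost_max E F own lam w i hΛ
  rw [pun, dif_pos hex]
  exact ⟨hex.choose_spec.1, hex.choose_spec.2⟩

noncomputable def go2 : (ℕ → XV V P) → List (XV V P) → ℕ → XV V P
  | p, [] => p
  | p, w :: t =>
    go2 (if w = p 1 then (fun k => p (k + 1)) else pun E F own lam htot (own (p 0).1) w) t

lemma go2_append (t : List (XV V P)) : ∀ (p : ℕ → XV V P) (w : XV V P),
    go2 E F own lam htot p (t ++ [w]) =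
      (if w = (go2 E F own lam htot p t) 1
       then (fun k => (go2 E F own lam htot p t) (k + 1))
       else pun E F own lam htot (own ((go2 E F own lam htot p t) 0).1) w) := by
  induction t with
  | nil => intro p w; rfl
  | cons a t ih =>
    intro p w
    exact ih _ w

lemma go2_edges (t : List (XV V P)) : ∀ (p : ℕ → XV V P),
    (∀ k, XEdge E F (p k) (p (k + 1))) →
    ∀ k, XEdge E F (go2 E F own lam htot p t k) (go2 E F own lam htot p t (k + 1)) := by
  induction t with
  | nil => intro p hp; exact hp
  | cons a t ih =>
    intro p hp
    apply ih
    split_ifs with hc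
    · exact fun k => hp (k + 1)
    · exact (pun_isPlay E F own lam htot (own (p 0).1) a).2

noncomputable def sig (ρ0 : ℕ → XV V P) (h : List (XV V P)) (v : XV V P) : XV V P :=
  if (go2 E F own lam htot ρ0 (h ++ [v]).tail) 0 = v
  then (go2 E F own lam htot ρ0 (h ++ [v]).tail) 1
  else basePlay E F htot v 1

variable {ρ0 : ℕ → XV V P}

lemma sig_valid (hE0 : ∀ k, XEdge E F (ρ0 k) (ρ0 (k + 1))) :
    StratValid E F (sig E F own lam htot ρ0) := by
  intro h v
  rw [sig]
  split_ifs with h0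
  · have := go2_edges E F own lam htot (h ++ [v]).tail ρ0 hE0 0
    rwa [h0] at this
  · exact (basePlay_isPlay E F htot v).2 0

lemma tail_append_sing {α : Type*} (l : List α) (v w : α) :
    ((l ++ [v]) ++ [w]).tail = (l ++ [v]).tail ++ [w] := by
  cases l <;> simp

lemma head?_append_append {α : Type*} (l : List α) (v w : α) :
    ((l ++ [v]) ++ [w]).head? = (l ++ [v]).head? := by
  cases l <;> simp

lemma outcome_sig (hE0 : ∀ k, XEdge E F (ρ0 k) (ρ0 (k + 1))) :
    ∀ (k : ℕ) (h : List (XV V P)) (v : XV V P),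
    (go2 E F own lam htot ρ0 (h ++ [v]).tail) 0 = v →
    outcome (sig E F own lam htot ρ0) h v k = go2 E F own lam htot ρ0 (h ++ [v]).tail k := by
  intro k
  induction k with
  | zero => intro h v h0; exact h0.symm
  | succ k ih =>
    intro h v h0
    have hσv : sig E F own lam htot ρ0 h v = (go2 E F own lam htot ρ0 (h ++ [v]).tail) 1 := by
      rw [sig, if_pos h0]
    have hplan' : go2 E F own lam htot ρ0 ((h ++ [v]) ++ [sig E F own lam htot ρ0 h v]).tail
        = fun j => (go2 E F own lam htot ρ0 (h ++ [v]).tail) (j + 1) := by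
      rw [tail_append_sing, go2_append, hσv, if_pos rfl]
    have h0' : (go2 E F own lam htot ρ0
        ((h ++ [v]) ++ [sig E F own lam htot ρ0 h v]).tail) 0 = sig E F own lam htot ρ0 h v := by
      rw [hplan']
      exact hσv.symm
    have hkstep := ih (h ++ [v]) (sig E F own lam htot ρ0 h v) h0'
    calc outcome (sig E F own lam htot ρ0) h v (k + 1)
        = outcome (sig E F own lam htot ρ0) (h ++ [v]) (sig E F own lam htot ρ0 h v) k := rfl
      _ = go2 E F own lam htot ρ0 ((h ++ [v]) ++ [sig E F own lam htot ρ0 h v]).tail k := hkstep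
      _ = (go2 E F own lam htot ρ0 (h ++ [v]).tail) (k + 1) := by rw [hplan']

end Strategy

lemma history_snoc {E : V → V → Prop} {F : P → Set V} {x0 : XV V P}
    {h : List (XV V P)} {v w : XV V P}
    (hh : IsHistoryFrom E F x0 h v) (he : XEdge E F v w) :
    IsHistoryFrom E F x0 (h ++ [v]) w := by
  refine ⟨by rw [head?_append_append]; exact hh.1, ?_⟩
  apply List.isChain_append.mpr
  refine ⟨hh.2, List.isChain_singleton w, ?_⟩
  intro x hx y hy
  have hx' : x = v := by
    have : (h ++ [v]).getLast? = some v := by simp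
    rw [this] at hx
    exact (Option.some_inj.1 hx.symm)
  have hy' : w = y := by simpa using hy
  rw [hx', ← hy']
  exact he

lemma cost_outcome_succ (σ : List (XV V P) → XV V P → XV V P) (h : List (XV V P))
    (v : XV V P) (i : P) (hiv : i ∉ v.2) :
    cost (outcome σ h v) i = 1 + cost (outcome σ (h ++ [v]) (σ h v)) i := by
  have h1 : cost (outcome σ h v) i = 1 + costFrom (outcome σ h v) 1 i := by
    rw [cost]
    exact costFrom_succ hiv
  rw [h1]
  congr 1
  have h2 : (fun k => outcome σ h v (k + 1)) = outcome σ (h ++ [v]) (σ h v) := by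
    funext k
    rfl
  rw [cost, ← h2, costFrom_shift]

lemma XEdge_mono {E : V → V → Prop} {F : P → Set V} {a b : XV V P} (h : XEdge E F a b) :
    a.2 ⊆ b.2 := by
  rw [h.2]
  exact Set.subset_union_left


lemma plan_spec [Fintype V] [Fintype P]
    (E : V → V → Prop) (F : P → Set V) (own : V → P) (lam : XV V P → ℕ∞)
    (htot : ∀ u : V, ∃ w, E u w) (x0 : XV V P)
    (hne : ∀ v, Relation.ReflTransGen (XEdge E F) x0 v → (Lam E F own lam v).Nonempty)
    (ρ0 : ℕ → XV V P) (hρ0 : ρ0 ∈ Lam E F own lam x0) :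
    ∀ (h : List (XV V P)) (v : XV V P), IsHistoryFrom E F x0 h v →
      (go2 E F own lam htot ρ0 (h ++ [v]).tail) 0 = v ∧
      Consistent own lam (go2 E F own lam htot ρ0 (h ++ [v]).tail) ∧
      Relation.ReflTransGen (XEdge E F) x0 v := by
  intro h
  induction h using List.reverseRecOn with
  | nil =>
    intro v hv
    have hvx : v = x0 := by simpa using hv.1
    subst hvx
    exact ⟨hρ0.1.1, hρ0.2, Relation.ReflTransGen.refl⟩
  | append_singleton h u ih =>
    intro v hv
    have hhd : (h ++ [u]).head? = some x0 := by
      have h1 := hv.1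
      rwa [head?_append_append] at h1
    have hch := List.isChain_append.mp hv.2
    have hedge : XEdge E F u v := by
      apply hch.2.2 u ?_ v ?_
      · simp
      · simp
    have hprev : IsHistoryFrom E F x0 h u := ⟨hhd, hch.1⟩
    obtain ⟨q0, qcons, qreach⟩ := ih u hprev
    have hreach : Relation.ReflTransGen (XEdge E F) x0 v := qreach.tail hedge
    rw [tail_append_sing, go2_append]
    split_ifs with hcase
    · exact ⟨hcase.symm, qcons.shift1, hreach⟩
    · have hΛ : (Lam E F own lam v).Nonempty := hne v hreach
      have hp := pun_spec E F own lam htot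
        (own ((go2 E F own lam htot ρ0 (h ++ [u]).tail) 0).1) v hΛ
      exact ⟨hp.1.1.1, hp.1.2, hreach⟩


/-- if every vertex reachable from `x₀` has a nonempty set `Λ*(v)` of
`λ*`-consistent plays, then every play in `Λ*(x₀)` is the outcome of some SPE of
`(X, x₀)`, where `λ*` satisfies the fixpoint equation. -/
theorem stmt9 {V P : Type*} [Fintype V] [Fintype P]
    (E : V → V → Prop) (F : P → Set V) (own : V → P) (x0 : XV V P)
    (htot : ∀ u : V, ∃ w, E u w)
    (lam : XV V P → ℕ∞)
    (hfix : ∀ w, lam w = update E F own lam w)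
    (hne : ∀ v, Relation.ReflTransGen (XEdge E F) x0 v → (Lam E F own lam v).Nonempty)
    (ρ0 : ℕ → XV V P) (hρ0 : ρ0 ∈ Lam E F own lam x0) :
    ∃ σ, IsSPE E F own x0 σ ∧ ∀ n, outcome σ [] x0 n = ρ0 n := by
  classical
  have hE0 : ∀ k, XEdge E F (ρ0 k) (ρ0 (k + 1)) := hρ0.1.2
  have hvalid : StratValid E F (sig E F own lam htot ρ0) := sig_valid E F own lam htot hE0
  have hplan := plan_spec E F own lam htot x0 hne ρ0 hρ0
  have houtσ := outcome_sig E F own lam htot hE0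
  have key : ∀ K : ℕ, ∀ (h : List (XV V P)) (v : XV V P), IsHistoryFrom E F x0 h v →
      ∀ (i : P) (τ : List (XV V P) → XV V P → XV V P), StratValid E F τ →
      Deviation own (sig E F own lam htot ρ0) τ i → cost (outcome τ h v) i ≤ (K : ℕ∞) →
      cost (outcome (sig E F own lam htot ρ0) h v) i ≤ cost (outcome τ h v) i := by
    intro K
    induction K with
    | zero =>
      intro h v hhist i τ hτ hdev hle
      have hle' : costFrom (outcome τ h v) 0 i ≤ ((0 : ℕ) : ℕ∞) := hle
      obtain ⟨k, hk0, hk⟩ := costFrom_le_coe.1 hle'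
      have hk' : k = 0 := Nat.le_zero.1 hk0
      subst hk'
      have h00 : outcome τ h v (0 + 0) = v := rfl
      rw [h00] at hk
      have hz : cost (outcome (sig E F own lam htot ρ0) h v) i = 0 :=
        costFrom_eq_zero (show i ∈ ((outcome (sig E F own lam htot ρ0) h v) 0).2 from hk)
      rw [hz]
      exact zero_le
    | succ K IH =>
      intro h v hhist i τ hτ hdev hle
      by_cases hiv : i ∈ v.2
      · have hz : cost (outcome (sig E F own lam htot ρ0) h v) i = 0 :=
          costFrom_eq_zero (show i ∈ ((outcome (sig E F own lam htot ρ0) h v) 0).2 from hiv)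
        rw [hz]
        exact zero_le
      · have hτe : XEdge E F v (τ h v) := hτ h v
        have hhτ : IsHistoryFrom E F x0 (h ++ [v]) (τ h v) := history_snoc hhist hτe
        have hcτ : cost (outcome τ h v) i = 1 + cost (outcome τ (h ++ [v]) (τ h v)) i :=
          cost_outcome_succ τ h v i hiv
        have hsub : cost (outcome τ (h ++ [v]) (τ h v)) i ≤ (K : ℕ∞) := by
          rw [hcτ, show ((K + 1 : ℕ) : ℕ∞) = 1 + (K : ℕ∞) from by push_cast; ring] at hle
          exact (WithTop.add_le_add_iff_left (by simp : (1 : ℕ∞) ≠ ⊤)).1 hle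
        by_cases hsame : τ h v = sig E F own lam htot ρ0 h v
        · have hcσ : cost (outcome (sig E F own lam htot ρ0) h v) i
              = 1 + cost (outcome (sig E F own lam htot ρ0) (h ++ [v])
                  (sig E F own lam htot ρ0 h v)) i :=
            cost_outcome_succ (sig E F own lam htot ρ0) h v i hiv
          rw [hcσ, hcτ, ← hsame]
          exact add_le_add le_rfl (IH (h ++ [v]) (τ h v) hhτ i τ hτ hdev hsub)
        · have hown : own v.1 = i := by
            by_contra hni
            exact hsame (hdev h v hni)
          obtain ⟨hp0, hpcons, hreach⟩ := hplan h v hhist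
          have houts : outcome (sig E F own lam htot ρ0) h v
              = go2 E F own lam htot ρ0 (h ++ [v]).tail :=
            funext fun k => houtσ k h v hp0
          have h1 : cost (outcome (sig E F own lam htot ρ0) h v) i ≤ lam v := by
            have hc := hpcons 0
            rw [hp0, hown] at hc
            rw [houts]
            exact hc
          have hreach' : Relation.ReflTransGen (XEdge E F) x0 (τ h v) := hreach.tail hτe
          have hΛw' : (Lam E F own lam (τ h v)).Nonempty := hne _ hreach'
          have hpun := pun_spec E F own lam htot i (τ h v) hΛw'
          have h2 : lam v ≤ 1 + sSup ((fun ρ => cost ρ i) '' Lam E F own lam (τ h v)) := by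
            rw [hfix v, update, if_neg (show ¬ own v.1 ∈ v.2 by rw [hown]; exact hiv), hown]
            exact iInf₂_le (τ h v) hτe
          have h3 : sSup ((fun ρ => cost ρ i) '' Lam E F own lam (τ h v)) ≤
              cost (pun E F own lam htot i (τ h v)) i := by
            apply sSup_le
            rintro b ⟨ρ', hρ', rfl⟩
            exact hpun.2 ρ' hρ'
          have hσ1 : sig E F own lam htot ρ0 h v
              = (go2 E F own lam htot ρ0 (h ++ [v]).tail) 1 := by
            rw [sig, if_pos hp0]
          have hplan' : go2 E F own lam htot ρ0 ((h ++ [v]) ++ [τ h v]).tail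
              = pun E F own lam htot i (τ h v) := by
            rw [tail_append_sing, go2_append,
              if_neg (fun hc => hsame (hc.trans hσ1.symm)), hp0, hown]
          have houts' : outcome (sig E F own lam htot ρ0) (h ++ [v]) (τ h v)
              = pun E F own lam htot i (τ h v) := by
            funext k
            rw [houtσ k (h ++ [v]) (τ h v)
              (by rw [hplan']; exact (pun_isPlay E F own lam htot i (τ h v)).1), hplan']
          have h4 := IH (h ++ [v]) (τ h v) hhτ i τ hτ hdev hsub
          calc cost (outcome (sig E F own lam htot ρ0) h v) i ≤ lam v := h1
            _ ≤ 1 + sSup ((fun ρ => cost ρ i) '' Lam E F own lam (τ h v)) := h2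
            _ ≤ 1 + cost (pun E F own lam htot i (τ h v)) i := add_le_add le_rfl h3
            _ = 1 + cost (outcome (sig E F own lam htot ρ0) (h ++ [v]) (τ h v)) i := by
                rw [houts']
            _ ≤ 1 + cost (outcome τ (h ++ [v]) (τ h v)) i := add_le_add le_rfl h4
            _ = cost (outcome τ h v) i := hcτ.symm
  refine ⟨sig E F own lam htot ρ0, ⟨hvalid, ?_⟩, ?_⟩
  · intro h v hhist i τ hτ hdev
    apply costAfter_mono
    by_cases htopc : cost (outcome τ h v) i = ⊤
    · rw [htopc]; exact le_top
    · obtain ⟨K, hK⟩ := WithTop.ne_top_iff_exists.1 htopc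
      exact key K h v hhist i τ hτ hdev (le_of_eq hK.symm)
  · intro n
    have h0 : (go2 E F own lam htot ρ0 (([] : List (XV V P)) ++ [x0]).tail) 0 = x0 := hρ0.1.1
    rw [houtσ n [] x0 h0]
    rfl


end SPE
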